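/- The vector field Y3ᵃ = q3 ∂/∂q1 + q1 ∂/∂q2 + q2 ∂/∂q3 + p3 ∂/∂p1 + p1 ∂/∂p2 + p2 ∂/∂p3 commutes with the Hamiltonian vector field Γ_H of H: the Lie bracket [Y3ᵃ, Γ_H] = 0, even though Y3ᵃ(H) ≠ 0 in general. -/

import Mathlib

open scoped BigOperators

/-- Partial derivative of a function on phase space ℝ⁶ in the i-th coordinate. -/
noncomputable def pd (i : Fin 6) (f : (Fin 6 → ℝ) → ℝ) (x : Fin 6 → ℝ) : ℝ :=
  fderiv ℝ f x (Pi.single i 1)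

/-- Canonical Poisson bracket on ℝ⁶ with coordinates (q1,q2,q3,p1,p2,p3). -/
noncomputable def pb (F G : (Fin 6 → ℝ) → ℝ) (x : Fin 6 → ℝ) : ℝ :=
  (pd 0 F x * pd 3 G x - pd 3 F x * pd 0 G x) +
  (pd 1 F x * pd 4 G x - pd 4 F x * pd 1 G x) +
  (pd 2 F x * pd 5 G x - pd 5 F x * pd 2 G x)

/-- Angular momentum components: L1 = q2 p3 − q3 p2, etc. -/
def L1 (x : Fin 6 → ℝ) : ℝ := x 1 * x 5 - x 2 * x 4
def L2 (x : Fin 6 → ℝ) : ℝ := x 2 * x 3 - x 0 * x 5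
def L3 (x : Fin 6 → ℝ) : ℝ := x 0 * x 4 - x 1 * x 3

/-- The Hamiltonian of the coupled oscillators with magnetic terms. -/
noncomputable def Ham (b k : ℝ) (x : Fin 6 → ℝ) : ℝ :=
  (1/2) * (x 3 ^ 2 + x 4 ^ 2 + x 5 ^ 2) + b * (L1 x + L2 x + L3 x) +
  (1/2) * (b ^ 2 + k) * ((x 1 - x 0) ^ 2 + (x 2 - x 1) ^ 2 + (x 0 - x 2) ^ 2)

/-- J2 = p1 + p2 + p3. -/
def J2 (x : Fin 6 → ℝ) : ℝ := x 3 + x 4 + x 5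

/-- J3 = L1 + L2 + L3. -/
def J3 (x : Fin 6 → ℝ) : ℝ := L1 x + L2 x + L3 x

/-- The Hamiltonian vector field of H, components (∂H/∂pᵢ, −∂H/∂qᵢ). -/
noncomputable def GammaH (b k : ℝ) (x : Fin 6 → ℝ) : Fin 6 → ℝ :=
  ![pd 3 (Ham b k) x, pd 4 (Ham b k) x, pd 5 (Ham b k) x,
    -pd 0 (Ham b k) x, -pd 1 (Ham b k) x, -pd 2 (Ham b k) x]

/-- The vector field Y3ᵃ = q3 ∂q1 + q1 ∂q2 + q2 ∂q3 + p3 ∂p1 + p1 ∂p2 + p2 ∂p3. -/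
def Y3a (x : Fin 6 → ℝ) : Fin 6 → ℝ := ![x 2, x 0, x 1, x 5, x 3, x 4]

noncomputable def P (i : Fin 6) : (Fin 6 → ℝ) →L[ℝ] ℝ := ContinuousLinearMap.proj i

lemma hasF_sq {f : (Fin 6 → ℝ) → ℝ} {f' : (Fin 6 → ℝ) →L[ℝ] ℝ} {x : Fin 6 → ℝ}
    (hf : HasFDerivAt f f' x) :
    HasFDerivAt (fun y => f y ^ 2) ((2 * f x) • f') x := by
  have h : HasFDerivAt (fun y => f y * f y) (f x • f' + f x • f') x := hf.mul hf
  simp only [pow_two]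
  convert h using 1
  rw [two_mul, add_smul]

lemma fderiv_Ham (b k : ℝ) (x v : Fin 6 → ℝ) :
    fderiv ℝ (Ham b k) x v =
      x 3 * v 3 + x 4 * v 4 + x 5 * v 5
      + b * ((v 1 * x 5 + x 1 * v 5 - (v 2 * x 4 + x 2 * v 4))
           + (v 2 * x 3 + x 2 * v 3 - (v 0 * x 5 + x 0 * v 5))
           + (v 0 * x 4 + x 0 * v 4 - (v 1 * x 3 + x 1 * v 3)))
      + (b ^ 2 + k) * ((x 1 - x 0) * (v 1 - v 0) + (x 2 - x 1) * (v 2 - v 1)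
           + (x 0 - x 2) * (v 0 - v 2)) := by
  have h0 := fun i : Fin 6 => hasFDerivAt_apply (𝕜 := ℝ) i x
  have hA := ((hasF_sq (h0 3)).add (hasF_sq (h0 4))).add (hasF_sq (h0 5))
  have hL := ((((h0 1).mul (h0 5)).sub ((h0 2).mul (h0 4))).add
      (((h0 2).mul (h0 3)).sub ((h0 0).mul (h0 5)))).add
      (((h0 0).mul (h0 4)).sub ((h0 1).mul (h0 3)))
  have hC := ((hasF_sq ((h0 1).sub (h0 0))).add (hasF_sq ((h0 2).sub (h0 1)))).add
      (hasF_sq ((h0 0).sub (h0 2)))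
  have h : HasFDerivAt (Ham b k) _ x :=
    ((hA.const_mul ((1:ℝ)/2)).add (hL.const_mul b)).add (hC.const_mul ((1/2) * (b ^ 2 + k)))
  rw [h.fderiv]
  simp [ContinuousLinearMap.add_apply, ContinuousLinearMap.smul_apply,
    ContinuousLinearMap.sub_apply, ContinuousLinearMap.proj_apply, smul_eq_mul]
  ring

@[simp] lemma vec6_two {α : Type*} (a0 a1 a2 a3 a4 a5 : α) :
    (![a0, a1, a2, a3, a4, a5] : Fin 6 → α) 2 = a2 := rfl
@[simp] lemma vec6_three {α : Type*} (a0 a1 a2 a3 a4 a5 : α) :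
    (![a0, a1, a2, a3, a4, a5] : Fin 6 → α) 3 = a3 := rfl
@[simp] lemma vec6_four {α : Type*} (a0 a1 a2 a3 a4 a5 : α) :
    (![a0, a1, a2, a3, a4, a5] : Fin 6 → α) 4 = a4 := rfl
@[simp] lemma vec6_five {α : Type*} (a0 a1 a2 a3 a4 a5 : α) :
    (![a0, a1, a2, a3, a4, a5] : Fin 6 → α) 5 = a5 := rfl

noncomputable def Mrow (b k : ℝ) : Fin 6 → ((Fin 6 → ℝ) →L[ℝ] ℝ) :=
  ![P 3 + b • (P 2 - P 1),
    P 4 + b • (P 0 - P 2),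
    P 5 + b • (P 1 - P 0),
    -(b • (P 4 - P 5) + (b ^ 2 + k) • ((2 : ℝ) • P 0 - P 1 - P 2)),
    -(b • (P 5 - P 3) + (b ^ 2 + k) • ((2 : ℝ) • P 1 - P 0 - P 2)),
    -(b • (P 3 - P 4) + (b ^ 2 + k) • ((2 : ℝ) • P 2 - P 0 - P 1))]

noncomputable def Mmap (b k : ℝ) : (Fin 6 → ℝ) →L[ℝ] (Fin 6 → ℝ) :=
  ContinuousLinearMap.pi (Mrow b k)

noncomputable def Nmap : (Fin 6 → ℝ) →L[ℝ] (Fin 6 → ℝ) :=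
  ContinuousLinearMap.pi ![P 2, P 0, P 1, P 5, P 3, P 4]

lemma Y3a_eq : Y3a = ⇑Nmap := by
  funext x
  funext i
  fin_cases i <;>
    simp [Y3a, Nmap, P, ContinuousLinearMap.pi_apply]

lemma GammaH_eq (b k : ℝ) : GammaH b k = ⇑(Mmap b k) := by
  funext x
  funext i
  fin_cases i <;>
    simp [GammaH, pd, fderiv_Ham, Mmap, Mrow, P, ContinuousLinearMap.pi_apply,
      Pi.single_apply, ContinuousLinearMap.add_apply, ContinuousLinearMap.sub_apply,
      ContinuousLinearMap.smul_apply, ContinuousLinearMap.neg_apply,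
      ContinuousLinearMap.proj_apply, smul_eq_mul, -mul_eq_mul_left_iff,
      -mul_eq_mul_right_iff] <;>
    ring

/-- Y3ᵃ commutes with Γ_H : [Y3ᵃ, Γ_H] = DΓ_H·Y3ᵃ − DY3ᵃ·Γ_H = 0,
even though Y3ᵃ(H) ≠ 0 in general. -/
theorem stmt6 :
    (∀ (b k : ℝ) (x : Fin 6 → ℝ),
      fderiv ℝ (GammaH b k) x (Y3a x) - fderiv ℝ Y3a x (GammaH b k x) = 0) ∧
    (∃ (b k : ℝ) (x : Fin 6 → ℝ), fderiv ℝ (Ham b k) x (Y3a x) ≠ 0) := by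
  constructor
  · intro b k x
    rw [GammaH_eq, Y3a_eq, ContinuousLinearMap.fderiv, ContinuousLinearMap.fderiv]
    funext i
    fin_cases i <;>
      simp [Mmap, Nmap, Mrow, P, ContinuousLinearMap.pi_apply,
        ContinuousLinearMap.add_apply, ContinuousLinearMap.sub_apply,
        ContinuousLinearMap.smul_apply, ContinuousLinearMap.neg_apply,
        ContinuousLinearMap.proj_apply, smul_eq_mul] <;>
      ring
  · refine ⟨0, 0, fun _ => 1, ?_⟩
    rw [fderiv_Ham]
    norm_num [Y3a]
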